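/- arXiv:2002.08724 — 4 statements merged into one kernel-verified Lean document; each statement's English description precedes it below -/
import Mathlib

section
/- Let H be a complex Hilbert space, let G be a nonzero finite-dimensional subspace of H and let F be a closed subspace of H such that cos∠(G,F) > 0. Then for every f ∈ H there exists a unique element f̃ ∈ G satisfying the consistency condition Q_G(Q_F f̃) = Q_G(Q_F f), and this f̃ satisfies the sharp bound ‖f̃ − f‖ ≤ (1 / cos∠(G,F)) · ‖f − Q_G f‖. -/
/-- `cos∠(A,B) := inf{‖Q_B a‖ : a ∈ A, ‖a‖ = 1}`. -/
noncomputable def cosAngle {H : Type*} [NormedAddCommGroup H] [InnerProductSpace ℂ H]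
    (A B : Submodule ℂ H) [CompleteSpace B] : ℝ :=
  sInf ((fun a => ‖(Submodule.orthogonalProjectionOnto B a : H)‖) '' {a : H | a ∈ A ∧ ‖a‖ = 1})

section Aux
variable {H : Type*} [NormedAddCommGroup H] [InnerProductSpace ℂ H] [CompleteSpace H]
    (G F : Submodule ℂ H) [FiniteDimensional ℂ G] [CompleteSpace F]

local notation "⟪" x ", " y "⟫" => @inner ℂ _ _ x y

lemma cosAngle_le (a : H) (ha : a ∈ G) (hna : ‖a‖ = 1) :
    cosAngle G F ≤ ‖(Submodule.orthogonalProjectionOnto F a : H)‖ :=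
  csInf_le ⟨0, fun x hx => by obtain ⟨b, -, rfl⟩ := hx; exact norm_nonneg _⟩
    ⟨a, ⟨ha, hna⟩, rfl⟩

lemma cosAngle_mul_norm_le (g : H) (hg : g ∈ G) :
    cosAngle G F * ‖g‖ ≤ ‖(Submodule.orthogonalProjectionOnto F g : H)‖ := by
  rcases eq_or_ne g 0 with rfl | hg0
  · simp
  · have hn : ‖g‖ ≠ 0 := norm_ne_zero_iff.2 hg0
    have h1 : ‖(‖g‖⁻¹ : ℂ) • g‖ = 1 := by
      simp [norm_smul, inv_mul_cancel₀ hn]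
    have := cosAngle_le G F ((‖g‖⁻¹ : ℂ) • g) (G.smul_mem _ hg) h1
    rw [map_smul, Submodule.coe_smul, norm_smul] at this
    have h2 : ‖((‖g‖⁻¹ : ℂ))‖ = ‖g‖⁻¹ := by simp
    rw [h2] at this
    rw [mul_comm]
    calc ‖g‖ * cosAngle G F ≤ ‖g‖ * (‖g‖⁻¹ * ‖(Submodule.orthogonalProjectionOnto F g : H)‖) := by
          exact mul_le_mul_of_nonneg_left this (norm_nonneg _)
      _ = ‖(Submodule.orthogonalProjectionOnto F g : H)‖ := by field_simp

lemma cosAngle_le_one (hG : G ≠ ⊥) : cosAngle G F ≤ 1 := by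
  obtain ⟨x, hx, hx0⟩ := Submodule.exists_mem_ne_zero_of_ne_bot hG
  have hn : ‖x‖ ≠ 0 := norm_ne_zero_iff.2 hx0
  set a : H := (‖x‖⁻¹ : ℂ) • x with ha
  have h1 : ‖a‖ = 1 := by simp [ha, norm_smul, inv_mul_cancel₀ hn]
  have h2 : ‖(Submodule.orthogonalProjectionOnto F a : H)‖ ≤ ‖a‖ := by
    have h5 := (Submodule.orthogonalProjectionOnto F).le_opNorm a
    have h3 := Submodule.orthogonalProjectionOnto_norm_le F
    have h4 : ‖(Submodule.orthogonalProjectionOnto F a : H)‖ = ‖Submodule.orthogonalProjectionOnto F a‖ := rfl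
    rw [h4]
    nlinarith [norm_nonneg a]
  have h6 := cosAngle_le G F a (G.smul_mem _ hx) h1
  rw [h1] at h2
  linarith

set_option maxHeartbeats 1000000 in
/-- Key lemma: if `Q_F z ⊥ G` then `c‖z‖ ≤ ‖z - Q_G z‖`. -/
lemma key (hG : G ≠ ⊥) (hcos : 0 < cosAngle G F) (z : H)
    (hz : (Submodule.orthogonalProjectionOnto F z : H) ∈ Gᗮ) :
    cosAngle G F * ‖z‖ ≤ ‖z - (Submodule.orthogonalProjectionOnto G z : H)‖ := by
  set c := cosAngle G F with hc
  set g : H := (Submodule.orthogonalProjectionOnto G z : H) with hgdef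
  set y : H := z - g with hydef
  have hgG : g ∈ G := Submodule.coe_mem _
  have hyO : y ∈ Gᗮ := Submodule.sub_starProjection_mem_orthogonal z
  have hpyth : ‖z‖ ^ 2 = ‖g‖ ^ 2 + ‖y‖ ^ 2 := by
    have hzy : z = g + y := by simp [hydef]
    have hinner : ⟪g, y⟫ = 0 := (Submodule.mem_orthogonal G y).1 hyO g hgG
    rw [hzy, norm_add_sq (𝕜 := ℂ), hinner]
    simp
  rcases eq_or_ne g 0 with hg0 | hg0
  · have : y = z := by simp [hydef, hg0]
    rw [this]
    nlinarith [cosAngle_le_one G F hG, norm_nonneg z]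
  -- main case
  set v : H := (Submodule.orthogonalProjectionOnto F g : H) with hvdef
  have hvg : ⟪g, v⟫ = (‖v‖ : ℂ) ^ 2 := by
    have h := Submodule.inner_starProjection_left_eq_right (K := F) g v
    simp only [Submodule.starProjection_apply] at h
    rw [hvdef] at *
    rw [Submodule.orthogonalProjectionOnto_mem_subspace_eq_self] at h
    rw [← h]
    exact_mod_cast (inner_self_eq_norm_sq_to_K (𝕜 := ℂ) v)
  have hzv : ⟪z, v⟫ = 0 := by
    have h := Submodule.inner_starProjection_left_eq_right (K := F) z g
    simp only [Submodule.starProjection_apply] at h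
    have h0 : ⟪(Submodule.orthogonalProjectionOnto F z : H), g⟫ = 0 := by
      have := (Submodule.mem_orthogonal G _).1 hz g hgG
      rw [← inner_conj_symm, this, map_zero]
    rw [h0] at h
    rw [hvdef, ← h]
  have hyv : ⟪y, v⟫ = -(‖v‖ : ℂ) ^ 2 := by
    rw [hydef, inner_sub_left, hzv, hvg]; ring
  have hyg : ⟪y, g⟫ = 0 := by
    have := (Submodule.mem_orthogonal G y).1 hyO g hgG
    rw [← inner_conj_symm, this, map_zero]
  have hng : (0:ℝ) < ‖g‖ := norm_pos_iff.2 hg0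
  set α : ℝ := ‖v‖ ^ 2 / ‖g‖ ^ 2 with hα
  set r : H := v - (α : ℂ) • g with hr
  have hyr : ⟪y, r⟫ = -(‖v‖ : ℂ) ^ 2 := by
    rw [hr, inner_sub_right, inner_smul_right, hyv, hyg]; ring
  have hrn : ‖r‖ ^ 2 = ‖v‖ ^ 2 - ‖v‖ ^ 4 / ‖g‖ ^ 2 := by
    have hvv : ⟪v, g⟫ = (‖v‖ : ℂ) ^ 2 := by
      rw [← inner_conj_symm, hvg]; simp
    rw [hr, norm_sub_sq (𝕜 := ℂ), inner_smul_right, hvv, norm_smul]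
    have hre : RCLike.re ((α : ℂ) * (‖v‖ : ℂ) ^ 2) = α * ‖v‖ ^ 2 := by
      push_cast
      simp [← Complex.ofReal_pow, ← Complex.ofReal_mul]
    rw [hre]
    have hα2 : ‖(α : ℂ)‖ = α := by
      simp [hα]
    rw [hα2, hα]
    field_simp
    ring
  have hCS : ‖v‖ ^ 4 ≤ ‖y‖ ^ 2 * ‖r‖ ^ 2 := by
    have := norm_inner_le_norm (𝕜 := ℂ) y r
    have habs : ‖⟪y, r⟫‖ = ‖v‖ ^ 2 := by
      rw [hyr]; simp [norm_pow]
    nlinarith [norm_nonneg y, norm_nonneg r, norm_nonneg v]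
  have hlow : c * ‖g‖ ≤ ‖v‖ := cosAngle_mul_norm_le G F g hgG
  -- derive c²‖z‖² ≤ ‖y‖²
  have hV : (0:ℝ) < ‖v‖ := lt_of_lt_of_le (mul_pos hcos hng) hlow
  have hV2 : c ^ 2 * ‖g‖ ^ 2 ≤ ‖v‖ ^ 2 := by
    nlinarith [mul_self_le_mul_self (le_of_lt (mul_pos hcos hng)) hlow]
  have hmain : c ^ 2 * ‖z‖ ^ 2 ≤ ‖y‖ ^ 2 := by
    rw [hpyth]
    rw [hrn] at hCS
    have h1 : ‖v‖ ^ 4 * ‖g‖ ^ 2 ≤ ‖y‖ ^ 2 * (‖v‖ ^ 2 * ‖g‖ ^ 2 - ‖v‖ ^ 4) := by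
      have := mul_le_mul_of_nonneg_right hCS (le_of_lt (pow_pos hng 2))
      calc ‖v‖ ^ 4 * ‖g‖ ^ 2 ≤ ‖y‖ ^ 2 * (‖v‖ ^ 2 - ‖v‖ ^ 4 / ‖g‖ ^ 2) * ‖g‖ ^ 2 := this
        _ = ‖y‖ ^ 2 * (‖v‖ ^ 2 * ‖g‖ ^ 2 - ‖v‖ ^ 4) := by field_simp
    have step1 : ‖v‖ ^ 2 * ‖g‖ ^ 2 ≤ ‖y‖ ^ 2 * (‖g‖ ^ 2 - ‖v‖ ^ 2) := by
      have h2 : (‖v‖ ^ 2 * ‖g‖ ^ 2) * ‖v‖ ^ 2 ≤ (‖y‖ ^ 2 * (‖g‖ ^ 2 - ‖v‖ ^ 2)) * ‖v‖ ^ 2 := by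
        nlinarith [h1]
      exact le_of_mul_le_mul_right h2 (pow_pos hV 2)
    nlinarith [step1, hV2, mul_le_mul_of_nonneg_left hV2 (sq_nonneg ‖y‖),
      mul_le_mul_of_nonneg_right hV2 (le_of_lt (pow_pos hng 2)), pow_pos hng 2,
      sq_nonneg ‖y‖]
  have h0 : 0 ≤ c * ‖z‖ := mul_nonneg hcos.le (norm_nonneg z)
  nlinarith [norm_nonneg y]

end Aux

/-- the generalized sampling reconstruction exists, is unique and satisfies the
sharp error bound. -/
theorem stmt_0 {H : Type*} [NormedAddCommGroup H] [InnerProductSpace ℂ H] [CompleteSpace H]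
    (G F : Submodule ℂ H) [FiniteDimensional ℂ G] [CompleteSpace F]
    (hG : G ≠ ⊥) (hcos : 0 < cosAngle G F) (f : H) :
    (∃! ftilde : H, ftilde ∈ G ∧
        Submodule.orthogonalProjectionOnto G ((Submodule.orthogonalProjectionOnto F ftilde : H)) =
          Submodule.orthogonalProjectionOnto G ((Submodule.orthogonalProjectionOnto F f : H))) ∧
    (∀ ftilde : H, ftilde ∈ G →
        Submodule.orthogonalProjectionOnto G ((Submodule.orthogonalProjectionOnto F ftilde : H)) =
          Submodule.orthogonalProjectionOnto G ((Submodule.orthogonalProjectionOnto F f : H)) →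
        ‖ftilde - f‖ ≤ (1 / cosAngle G F) * ‖f - (Submodule.orthogonalProjectionOnto G f : H)‖) := by
  classical
  set c := cosAngle G F with hc
  -- the endomorphism T : G → G
  let T : G →ₗ[ℂ] G :=
    (Submodule.orthogonalProjectionOnto G).toLinearMap ∘ₗ F.subtype ∘ₗ
      (Submodule.orthogonalProjectionOnto F).toLinearMap ∘ₗ G.subtype
  have hT : ∀ g : G, T g = Submodule.orthogonalProjectionOnto G ((Submodule.orthogonalProjectionOnto F (g : H) : H)) := by
    intro g; rfl
  have hTinj : Function.Injective T := by
    rw [injective_iff_map_eq_zero]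
    intro g hg0
    rw [hT] at hg0
    have hperp : (Submodule.orthogonalProjectionOnto F (g : H) : H) ∈ Gᗮ :=
      Submodule.orthogonalProjectionOnto_eq_zero_iff.1 hg0
    have hQF0 : ‖(Submodule.orthogonalProjectionOnto F (g : H) : H)‖ = 0 := by
      set v : H := (Submodule.orthogonalProjectionOnto F (g : H) : H) with hv
      have h1 : @inner ℂ _ _ ((g : H)) v = (‖v‖ : ℂ) ^ 2 := by
        have h := Submodule.inner_starProjection_left_eq_right (K := F) (g : H) v
        simp only [Submodule.starProjection_apply] at h
        rw [hv] at *
        rw [Submodule.orthogonalProjectionOnto_mem_subspace_eq_self] at h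
        rw [← h]
        exact_mod_cast (inner_self_eq_norm_sq_to_K (𝕜 := ℂ) v)
      have h2 : @inner ℂ _ _ ((g : H)) v = 0 := by
        have := (Submodule.mem_orthogonal G v).1 hperp (g : H) g.2
        exact this
      have h3 : (‖v‖ : ℂ) ^ 2 = 0 := by rw [← h1, h2]
      have h4 : (‖v‖ : ℂ) = 0 := pow_eq_zero_iff two_ne_zero |>.1 h3
      exact_mod_cast h4
    have := cosAngle_mul_norm_le G F (g : H) g.2
    rw [hQF0] at this
    have hgn : ‖(g : H)‖ = 0 := by nlinarith [norm_nonneg (g : H)]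
    ext1
    simpa using norm_eq_zero.1 hgn
  have hTsurj : Function.Surjective T := (LinearMap.injective_iff_surjective).1 hTinj
  obtain ⟨g0, hg0⟩ := hTsurj (Submodule.orthogonalProjectionOnto G ((Submodule.orthogonalProjectionOnto F f : H)))
  constructor
  · refine ⟨(g0 : H), ⟨g0.2, by exact hg0⟩, ?_⟩
    rintro x ⟨hxG, hx⟩
    have heq2 : T ⟨x, hxG⟩ = T g0 := by rw [hg0]; exact hx
    have := hTinj heq2
    simpa using congrArg (Subtype.val) this
  · intro ftilde hftG hcons
    set z : H := ftilde - f with hz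
    have hzperp : (Submodule.orthogonalProjectionOnto F z : H) ∈ Gᗮ := by
      have : Submodule.orthogonalProjectionOnto G ((Submodule.orthogonalProjectionOnto F z : H)) = 0 := by
        have hsub : (Submodule.orthogonalProjectionOnto F z : H) =
            (Submodule.orthogonalProjectionOnto F ftilde : H) - (Submodule.orthogonalProjectionOnto F f : H) := by
          rw [hz, map_sub]; rfl
        rw [hsub, map_sub, hcons, sub_self]
      exact Submodule.orthogonalProjectionOnto_eq_zero_iff.1 this
    have hkey := key G F hG hcos z hzperp
    have hQGz : (Submodule.orthogonalProjectionOnto G z : H) = ftilde - (Submodule.orthogonalProjectionOnto G f : H) := by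
      rw [hz, map_sub]
      have : (Submodule.orthogonalProjectionOnto G ftilde : H) = ftilde :=
        Submodule.starProjection_eq_self_iff (K := G) |>.2 hftG
      rw [Submodule.coe_sub, this]
    have heq : z - (Submodule.orthogonalProjectionOnto G z : H) = (Submodule.orthogonalProjectionOnto G f : H) - f := by
      rw [hQGz, hz]; abel
    rw [heq] at hkey
    have hrev : ‖(Submodule.orthogonalProjectionOnto G f : H) - f‖ = ‖f - (Submodule.orthogonalProjectionOnto G f : H)‖ :=
      norm_sub_rev _ _
    rw [hrev] at hkey
    rw [div_mul_eq_mul_div, one_mul, le_div_iff₀ hcos]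
    calc ‖ftilde - f‖ * c = c * ‖z‖ := by rw [hz, mul_comm]
      _ ≤ _ := hkey
end

section
/- Let {ψ_k}_{k=1}^q and {φ_ℓ}_{ℓ=1}^p be orthonormal families in a complex Hilbert space H, let F := span{ψ_1,…,ψ_q} and G := span{φ_1,…,φ_p}, let A ∈ ℂ^{q×p} be the matrix with entries A_{kℓ} = ⟨φ_ℓ, ψ_k⟩, and let f ∈ H with b ∈ ℂ^q given by b_k = ⟨f, ψ_k⟩. Then a vector a ∈ ℂ^p minimizes ‖A a − b‖₂ over ℂ^p if and only if the function f̃ := Σ_{ℓ=1}^p a_ℓ φ_ℓ satisfies Q_G(Q_F f̃) = Q_G(Q_F f). -/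
set_option maxHeartbeats 1000000

open scoped ComplexConjugate
open Matrix

lemma ls_iff {q p : ℕ} (A : Matrix (Fin q) (Fin p) ℂ) (b : Fin q → ℂ) (a : Fin p → ℂ) :
    (∀ a' : Fin p → ℂ,
        ‖(WithLp.equiv 2 (Fin q → ℂ)).symm (A.mulVec a - b)‖ ≤
          ‖(WithLp.equiv 2 (Fin q → ℂ)).symm (A.mulVec a' - b)‖) ↔
      Aᴴ.mulVec (A.mulVec a) = Aᴴ.mulVec b := by
  classical
  set T := Matrix.toEuclideanLin A with hT
  set β : EuclideanSpace ℂ (Fin q) := (WithLp.equiv 2 (Fin q → ℂ)).symm b with hβ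
  have hTx : ∀ x : Fin p → ℂ,
      T ((WithLp.equiv 2 (Fin p → ℂ)).symm x) = (WithLp.equiv 2 (Fin q → ℂ)).symm (A.mulVec x) :=
    fun x => rfl
  have hsub : ∀ x : Fin p → ℂ,
      (WithLp.equiv 2 (Fin q → ℂ)).symm (A.mulVec x - b)
        = T ((WithLp.equiv 2 (Fin p → ℂ)).symm x) - β := by
    intro x
    rw [hTx, hβ]; rfl
  set K := LinearMap.range T with hK
  set v : EuclideanSpace ℂ (Fin q) := T ((WithLp.equiv 2 (Fin p → ℂ)).symm a) with hv
  have hvK : v ∈ K := LinearMap.mem_range_self T _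
  have hbdd : BddBelow (Set.range fun w : K => ‖β - (w : EuclideanSpace ℂ (Fin q))‖) := by
    refine ⟨0, ?_⟩
    rintro x ⟨w, rfl⟩
    exact norm_nonneg _
  have step1 : (∀ a' : Fin p → ℂ,
      ‖(WithLp.equiv 2 (Fin q → ℂ)).symm (A.mulVec a - b)‖ ≤
        ‖(WithLp.equiv 2 (Fin q → ℂ)).symm (A.mulVec a' - b)‖)
      ↔ ∀ w ∈ K, ‖β - v‖ ≤ ‖β - w‖ := by
    constructor
    · intro h w hw
      obtain ⟨x, rfl⟩ := hw
      have h2 := h ((WithLp.equiv 2 (Fin p → ℂ)) x)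
      rw [hsub, hsub, Equiv.symm_apply_apply] at h2
      rw [norm_sub_rev β v]
      rw [norm_sub_rev β (T x)]
      exact h2
    · intro h a'
      rw [hsub, hsub]
      rw [norm_sub_rev]
      rw [norm_sub_rev (T ((WithLp.equiv 2 (Fin p → ℂ)).symm a')) β]
      exact h _ (LinearMap.mem_range_self T _)
  have step2 : (∀ w ∈ K, ‖β - v‖ ≤ ‖β - w‖)
      ↔ (‖β - v‖ = ⨅ w : K, ‖β - (w : EuclideanSpace ℂ (Fin q))‖) := by
    constructor
    · intro h
      refine le_antisymm (le_ciInf fun w => h w w.2) (ciInf_le hbdd ⟨v, hvK⟩)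
    · intro h w hw
      rw [h]
      exact ciInf_le hbdd ⟨w, hw⟩
  have step3 := Submodule.norm_eq_iInf_iff_inner_eq_zero (𝕜 := ℂ) K (u := β) hvK
  have step4 : (∀ w ∈ K, (inner ℂ (β - v) w : ℂ) = 0)
      ↔ LinearMap.adjoint T (β - v) = 0 := by
    constructor
    · intro h
      rw [← inner_self_eq_zero (𝕜 := ℂ), LinearMap.adjoint_inner_left]
      exact h _ (LinearMap.mem_range_self T _)
    · intro h w hw
      obtain ⟨x, rfl⟩ := hw
      rw [← LinearMap.adjoint_inner_left, h, inner_zero_left]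
  have step5 : LinearMap.adjoint T (β - v) = 0 ↔ Aᴴ.mulVec (A.mulVec a) = Aᴴ.mulVec b := by
    rw [hT, ← Matrix.toEuclideanLin_conjTranspose_eq_adjoint]
    have hβv : β - v = (WithLp.equiv 2 (Fin q → ℂ)).symm (b - A.mulVec a) := by
      rw [hv, hTx, hβ]; rfl
    rw [hβv, (show ∀ x, toEuclideanLin Aᴴ ((WithLp.equiv 2 (Fin q → ℂ)).symm x) =
        (WithLp.equiv 2 (Fin p → ℂ)).symm (Aᴴ *ᵥ x) from fun x => rfl),
      show (0 : EuclideanSpace ℂ (Fin p)) = (WithLp.equiv 2 (Fin p → ℂ)).symm 0 from rfl,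
      (WithLp.equiv 2 (Fin p → ℂ)).symm.injective.eq_iff,
      Matrix.mulVec_sub, sub_eq_zero, eq_comm]
  rw [step1, step2, step3, step4, step5]

lemma proj_span_orthonormal {H : Type*} [NormedAddCommGroup H] [InnerProductSpace ℂ H]
    {n : ℕ} {v : Fin n → H} (hv : Orthonormal ℂ v) {F : Submodule ℂ H} [CompleteSpace F]
    (hF : F = Submodule.span ℂ (Set.range v)) (x : H) :
    (Submodule.orthogonalProjection F x : H) = ∑ k, (inner ℂ (v k) x : ℂ) • v k := by
  subst hF
  rw [← Submodule.starProjection_apply]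
  apply Submodule.eq_starProjection_of_mem_of_inner_eq_zero
  · exact Submodule.sum_mem _ fun k _ =>
      Submodule.smul_mem _ _ (Submodule.subset_span ⟨k, rfl⟩)
  · intro w hw
    induction hw using Submodule.span_induction with
    | mem w hw =>
      obtain ⟨j, rfl⟩ := hw
      rw [inner_sub_left, sub_eq_zero, sum_inner]
      simp [inner_smul_left, orthonormal_iff_ite.mp hv, inner_conj_symm]
    | zero => simp
    | add y z _ _ hy hz => rw [inner_add_right, hy, hz, add_zero]
    | smul c y _ hy => rw [inner_smul_right, hy, mul_zero]

/-- equivalence between the least-squares formulation and the generalized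
sampling consistency condition. -/
theorem stmt_1 {H : Type*} [NormedAddCommGroup H] [InnerProductSpace ℂ H] [CompleteSpace H]
    {q p : ℕ} (ψ : Fin q → H) (φ : Fin p → H)
    (hψ : Orthonormal ℂ ψ) (hφ : Orthonormal ℂ φ)
    (F G : Submodule ℂ H) [CompleteSpace F] [CompleteSpace G]
    (hF : F = Submodule.span ℂ (Set.range ψ)) (hG : G = Submodule.span ℂ (Set.range φ))
    (A : Matrix (Fin q) (Fin p) ℂ) (hA : ∀ k l, A k l = inner ℂ (ψ k) (φ l))
    (f : H) (b : Fin q → ℂ) (hb : ∀ k, b k = inner ℂ (ψ k) f)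
    (a : Fin p → ℂ) :
    (∀ a' : Fin p → ℂ,
        ∑ k, ‖A.mulVec a k - b k‖ ^ 2 ≤
          ∑ k, ‖A.mulVec a' k - b k‖ ^ 2) ↔
      Submodule.orthogonalProjection G ((Submodule.orthogonalProjection F (∑ l, a l • φ l) : H)) =
        Submodule.orthogonalProjection G ((Submodule.orthogonalProjection F f : H)) := by
  classical
  -- sums of squares are squared Euclidean norms
  have hsum : ∀ x : Fin p → ℂ, ∑ k, ‖A.mulVec x k - b k‖ ^ 2
      = ‖(WithLp.equiv 2 (Fin q → ℂ)).symm (A.mulVec x - b)‖ ^ 2 := by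
    intro x
    rw [EuclideanSpace.norm_eq, Real.sq_sqrt (by positivity)]
    refine Finset.sum_congr rfl fun k _ => ?_
    rfl
  have hls : (∀ a' : Fin p → ℂ,
      ∑ k, ‖A.mulVec a k - b k‖ ^ 2 ≤
        ∑ k, ‖A.mulVec a' k - b k‖ ^ 2)
      ↔ Aᴴ.mulVec (A.mulVec a) = Aᴴ.mulVec b := by
    rw [← ls_iff A b a]
    refine forall_congr' fun a' => ?_
    rw [hsum a, hsum a']
    constructor
    · intro h
      exact le_of_pow_le_pow_left₀ two_ne_zero (norm_nonneg _) h
    · intro h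
      exact pow_le_pow_left₀ (norm_nonneg _) h 2
  -- projection formulas
  have hft : (Submodule.orthogonalProjection F (∑ l, a l • φ l) : H) = ∑ k, (A.mulVec a k) • ψ k := by
    rw [proj_span_orthonormal hψ hF]
    refine Finset.sum_congr rfl fun k _ => ?_
    congr 1
    rw [inner_sum]
    simp only [inner_smul_right, Matrix.mulVec, dotProduct]
    exact Finset.sum_congr rfl fun l _ => by rw [hA, mul_comm]
  have hf : (Submodule.orthogonalProjection F f : H) = ∑ k, b k • ψ k := by
    rw [proj_span_orthonormal hψ hF]
    exact Finset.sum_congr rfl fun k _ => by rw [hb]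
  have key : ∀ c : Fin q → ℂ,
      (Submodule.orthogonalProjection G (∑ k, c k • ψ k) : H) = ∑ l, (Aᴴ.mulVec c l) • φ l := by
    intro c
    rw [proj_span_orthonormal hφ hG]
    refine Finset.sum_congr rfl fun l _ => ?_
    congr 1
    rw [inner_sum]
    simp only [inner_smul_right, Matrix.mulVec, dotProduct, Matrix.conjTranspose_apply]
    refine Finset.sum_congr rfl fun k _ => ?_
    rw [hA, mul_comm]
    congr 1
    rw [← inner_conj_symm, starRingEnd_apply]
  have hsum_iff : ∀ c d : Fin p → ℂ,
      ((∑ l, c l • φ l) = ∑ l, d l • φ l) ↔ c = d := by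
    intro c d
    constructor
    · intro h
      have h0 : ∑ l, (c - d) l • φ l = 0 := by
        simp only [Pi.sub_apply, sub_smul, Finset.sum_sub_distrib, h, sub_self]
      funext l
      have := Fintype.linearIndependent_iff.mp hφ.linearIndependent (c - d) h0 l
      exact sub_eq_zero.mp this
    · rintro rfl; rfl
  rw [hls, ← SetLike.coe_eq_coe, hft, hf, key (A.mulVec a), key b, hsum_iff]
end

section
/- For any complex matrix A ∈ ℂ^{q×p}, the minimal singular value of A equals the minimal singular value of the real block matrix B ∈ ℝ^{2q×2p} given by B = [[Re A, −Im A], [Im A, Re A]]; that is, λ_min(AᴴA) = λ_min(BᵀB), where AᴴA is the p×p conjugate-transpose Gram matrix and BᵀB is the 2p×2p transpose Gram matrix. -/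
open Matrix
theorem mem_spec_iff {n : Type*} [Fintype n] [DecidableEq n] {K : Type*} [Field K]
    (M : Matrix n n K) (r : K) :
    r ∈ spectrum K M ↔ ∃ v ≠ 0, M.mulVec v = r • v := by
  rw [spectrum.mem_iff, Matrix.isUnit_iff_isUnit_det, isUnit_iff_ne_zero, not_ne_iff,
    ← Matrix.exists_mulVec_eq_zero_iff]
  have key : ∀ v : n → K, (algebraMap K (Matrix n n K) r - M) *ᵥ v = r • v - M *ᵥ v := by
    intro v
    rw [Matrix.sub_mulVec, Matrix.algebraMap_eq_diagonal]
    ext i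
    simp [Matrix.mulVec_diagonal]
  constructor
  · rintro ⟨v, hv, h⟩
    refine ⟨v, hv, ?_⟩
    rw [key, sub_eq_zero] at h
    exact h.symm
  · rintro ⟨v, hv, h⟩
    exact ⟨v, hv, by rw [key, h, sub_self]⟩

theorem spec_real_eq {n : Type*} [Fintype n] [DecidableEq n] (M : Matrix n n ℂ) :
    {r : ℝ | (r : ℂ) ∈ spectrum ℂ M} =
      spectrum ℝ (Matrix.fromBlocks (M.map Complex.re) (-(M.map Complex.im))
        (M.map Complex.im) (M.map Complex.re)) := by
  ext r
  rw [Set.mem_setOf_eq, mem_spec_iff, mem_spec_iff]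
  have hre : ∀ (v : n → ℂ) (i : n), ((M *ᵥ v) i).re
      = ∑ j, ((M i j).re * (v j).re - (M i j).im * (v j).im) := by
    intro v i
    simp [Matrix.mulVec, dotProduct, Complex.mul_re, Finset.sum_sub_distrib]
  have him : ∀ (v : n → ℂ) (i : n), ((M *ᵥ v) i).im
      = ∑ j, ((M i j).im * (v j).re + (M i j).re * (v j).im) := by
    intro v i
    simp [Matrix.mulVec, dotProduct, Complex.mul_im, Finset.sum_add_distrib]
    rw [add_comm]
  have hblk : ∀ (x y : n → ℝ) (i : n),
      (((M.map Complex.re) *ᵥ x + (-(M.map Complex.im)) *ᵥ y) i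
        = ∑ j, ((M i j).re * x j - (M i j).im * y j)) ∧
      (((M.map Complex.im) *ᵥ x + (M.map Complex.re) *ᵥ y) i
        = ∑ j, ((M i j).im * x j + (M i j).re * y j)) := by
    intro x y i
    constructor <;>
      simp [Matrix.mulVec, dotProduct, Finset.sum_sub_distrib, Finset.sum_add_distrib,
        sub_eq_add_neg]
  constructor
  · rintro ⟨v, hv, h⟩
    refine ⟨Sum.elim (fun i => (v i).re) (fun i => (v i).im), ?_, ?_⟩
    · intro hw
      apply hv
      funext i
      have h1 := congrFun hw (Sum.inl i)
      have h2 := congrFun hw (Sum.inr i)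
      simp at h1 h2
      exact Complex.ext h1 h2
    · rw [Matrix.fromBlocks_mulVec]
      have hcl : (Sum.elim (fun i => (v i).re) (fun i => (v i).im) : n ⊕ n → ℝ) ∘ Sum.inl
          = fun i => (v i).re := rfl
      have hcr : (Sum.elim (fun i => (v i).re) (fun i => (v i).im) : n ⊕ n → ℝ) ∘ Sum.inr
          = fun i => (v i).im := rfl
      rw [hcl, hcr]
      funext i
      cases i with
      | inl i =>
        have e1 := (hblk (fun i => (v i).re) (fun i => (v i).im) i).1
        have e2 := hre v i
        rw [congrFun h i] at e2
        simp only [Sum.elim_inl, Pi.smul_apply, smul_eq_mul]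
        rw [e1, ← e2]
        simp
      | inr i =>
        have e1 := (hblk (fun i => (v i).re) (fun i => (v i).im) i).2
        have e2 := him v i
        rw [congrFun h i] at e2
        simp only [Sum.elim_inr, Pi.smul_apply, smul_eq_mul]
        rw [e1, ← e2]
        simp
  · rintro ⟨w, hw, h⟩
    set x : n → ℝ := fun i => w (Sum.inl i) with hx
    set y : n → ℝ := fun i => w (Sum.inr i) with hy
    rw [Matrix.fromBlocks_mulVec] at h
    have h1 : ∀ i, ((M.map Complex.re) *ᵥ x + (-(M.map Complex.im)) *ᵥ y) i = r * x i := by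
      intro i; have := congrFun h (Sum.inl i); simpa [hx, hy, Function.comp_def] using this
    have h2 : ∀ i, ((M.map Complex.im) *ᵥ x + (M.map Complex.re) *ᵥ y) i = r * y i := by
      intro i; have := congrFun h (Sum.inr i); simpa [hx, hy, Function.comp_def] using this
    refine ⟨fun i => ⟨x i, y i⟩, ?_, ?_⟩
    · intro hv
      apply hw
      funext i
      cases i with
      | inl i =>
        have := congrFun hv i
        rw [Pi.zero_apply, Complex.ext_iff] at this
        exact this.1
      | inr i =>
        have := congrFun hv i
        rw [Pi.zero_apply, Complex.ext_iff] at this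
        exact this.2
    · funext i
      apply Complex.ext
      · have e1 := (hblk x y i).1
        rw [h1 i] at e1
        rw [hre (fun i => ⟨x i, y i⟩) i]
        simp only [← e1, Pi.smul_apply, smul_eq_mul]
        simp
      · have e1 := (hblk x y i).2
        rw [h2 i] at e1
        rw [him (fun i => ⟨x i, y i⟩) i]
        simp only [← e1, Pi.smul_apply, smul_eq_mul]
        simp


/-- The minimal eigenvalue of a (Hermitian) complex matrix: the smallest real number in its
spectrum. -/
noncomputable def lambdaMinC {n : Type*} [Fintype n] [DecidableEq n] (M : Matrix n n ℂ) : ℝ :=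
  sInf {r : ℝ | (r : ℂ) ∈ spectrum ℂ M}

/-- The minimal eigenvalue of a (symmetric) real matrix: the smallest element of its
spectrum. -/
noncomputable def lambdaMinR {n : Type*} [Fintype n] [DecidableEq n] (M : Matrix n n ℝ) : ℝ :=
  sInf (spectrum ℝ M)

/-- the minimal singular value of a complex matrix `A` equals the minimal singular
value of the real block matrix `B = [[Re A, −Im A], [Im A, Re A]]`, i.e.
`λ_min(AᴴA) = λ_min(BᵀB)`. -/
theorem stmt_3 {q p : ℕ} (A : Matrix (Fin q) (Fin p) ℂ)
    (B : Matrix (Fin q ⊕ Fin q) (Fin p ⊕ Fin p) ℝ)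
    (hB : B = Matrix.fromBlocks (A.map Complex.re) (-(A.map Complex.im))
      (A.map Complex.im) (A.map Complex.re)) :
    lambdaMinC (A.conjTranspose * A) = lambdaMinR (B.transpose * B) := by

  have hBB : B.transpose * B =
      Matrix.fromBlocks ((A.conjTranspose * A).map Complex.re)
        (-((A.conjTranspose * A).map Complex.im))
        ((A.conjTranspose * A).map Complex.im) ((A.conjTranspose * A).map Complex.re) := by
    subst hB
    rw [Matrix.fromBlocks_transpose, Matrix.fromBlocks_multiply]
    ext i j
    rcases i with i | i <;> rcases j with j | j <;>
      simp [Matrix.mul_apply, Matrix.conjTranspose_apply, Complex.mul_re, Complex.mul_im,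
        Finset.sum_add_distrib, Finset.sum_sub_distrib, mul_comm] <;> ring
  rw [hBB]
  unfold lambdaMinC lambdaMinR
  rw [spec_real_eq]
end

section
/- Let E be a nonzero closed subspace and Ê a closed subspace of a complex Hilbert space H. Then for any vectors f, μ, μ̂ ∈ H, ‖(f − μ̂) − Q_Ê(f − μ̂)‖ ≤ sin∠(E,Ê) · ‖f − μ‖ + ‖(f − μ) − Q_E(f − μ)‖ + ‖μ − μ̂‖. -/
/-- `sin∠(A,B) := sup{‖a − Q_B a‖ : a ∈ A, ‖a‖ = 1}`. -/
noncomputable def sinAngle {H : Type*} [NormedAddCommGroup H] [InnerProductSpace ℂ H]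
    (A B : Submodule ℂ H) [CompleteSpace B] : ℝ :=
  sSup ((fun a => ‖a - (Submodule.orthogonalProjectionOnto B a : H)‖) '' {a : H | a ∈ A ∧ ‖a‖ = 1})

lemma dist_proj_le {H : Type*} [NormedAddCommGroup H] [InnerProductSpace ℂ H] [CompleteSpace H]
    (K : Submodule ℂ H) [CompleteSpace K] (x : H) :
    ‖x - (Submodule.orthogonalProjectionOnto K x : H)‖ ≤ ‖x‖ := by
  rw [← Submodule.starProjection_apply, ← Submodule.starProjection_orthogonal_val,
    Submodule.starProjection_apply]
  calc ‖(Submodule.orthogonalProjectionOnto Kᗮ x : H)‖ ≤ ‖Submodule.orthogonalProjectionOnto Kᗮ‖ * ‖x‖ :=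
        (Submodule.orthogonalProjectionOnto Kᗮ).le_opNorm x
    _ ≤ 1 * ‖x‖ := by
        exact mul_le_mul_of_nonneg_right (Submodule.orthogonalProjectionOnto_norm_le _) (norm_nonneg x)
    _ = ‖x‖ := one_mul _

lemma dist_proj_add_le {H : Type*} [NormedAddCommGroup H] [InnerProductSpace ℂ H]
    [CompleteSpace H] (K : Submodule ℂ H) [CompleteSpace K] (x y : H) :
    ‖(x + y) - (Submodule.orthogonalProjectionOnto K (x + y) : H)‖ ≤
      ‖x - (Submodule.orthogonalProjectionOnto K x : H)‖ + ‖y - (Submodule.orthogonalProjectionOnto K y : H)‖ := by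
  have h : (x + y) - ((Submodule.orthogonalProjectionOnto K x : H) + (Submodule.orthogonalProjectionOnto K y : H)) =
      (x - (Submodule.orthogonalProjectionOnto K x : H)) + (y - (Submodule.orthogonalProjectionOnto K y : H)) := by abel
  rw [map_add, Submodule.coe_add, h]
  exact norm_add_le _ _

/-- `‖(f − μ̂) − Q_Ê(f − μ̂)‖ ≤ sin∠(E,Ê)·‖f − μ‖ + ‖(f − μ) − Q_E(f − μ)‖ + ‖μ − μ̂‖`. -/
theorem stmt_7 {H : Type*} [NormedAddCommGroup H] [InnerProductSpace ℂ H] [CompleteSpace H]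
    (E Ehat : Submodule ℂ H) [CompleteSpace E] [CompleteSpace Ehat] (hE : E ≠ ⊥)
    (f μ μhat : H) :
    ‖(f - μhat) - (Submodule.orthogonalProjectionOnto Ehat (f - μhat) : H)‖ ≤
      sinAngle E Ehat * ‖f - μ‖ +
        ‖(f - μ) - (Submodule.orthogonalProjectionOnto E (f - μ) : H)‖ + ‖μ - μhat‖ := by
  set S := (fun a => ‖a - (Submodule.orthogonalProjectionOnto Ehat a : H)‖) '' {a : H | a ∈ E ∧ ‖a‖ = 1}
  have hbdd : BddAbove S := by
    refine ⟨1, ?_⟩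
    rintro r ⟨a, ⟨haE, ha1⟩, rfl⟩
    simpa [ha1] using dist_proj_le Ehat a
  have hkey : ∀ a ∈ E, ‖a - (Submodule.orthogonalProjectionOnto Ehat a : H)‖ ≤ sinAngle E Ehat * ‖a‖ := by
    intro a haE
    rcases eq_or_ne a 0 with rfl | ha0
    · simp
    · have hna : (‖a‖ : ℝ) ≠ 0 := norm_ne_zero_iff.mpr ha0
      set u : H := (‖a‖⁻¹ : ℂ) • a with hu
      have huE : u ∈ E := E.smul_mem _ haE
      have hu1 : ‖u‖ = 1 := by
        rw [hu, norm_smul]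
        simp [norm_inv, hna]
      have hmem : ‖u - (Submodule.orthogonalProjectionOnto Ehat u : H)‖ ∈ S := ⟨u, ⟨huE, hu1⟩, rfl⟩
      have hle : ‖u - (Submodule.orthogonalProjectionOnto Ehat u : H)‖ ≤ sinAngle E Ehat :=
        le_csSup hbdd hmem
      have hEq : ‖a - (Submodule.orthogonalProjectionOnto Ehat a : H)‖ =
          ‖a‖ * ‖u - (Submodule.orthogonalProjectionOnto Ehat u : H)‖ := by
        have : a = (‖a‖ : ℂ) • u := by
          rw [hu, smul_smul]
          simp [hna]
        rw [this, map_smul]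
        push_cast
        rw [← smul_sub, norm_smul]
        simp [norm_smul, hu1]
      rw [hEq, mul_comm]
      exact mul_le_mul_of_nonneg_right hle (norm_nonneg a)
  have hsin_nonneg : 0 ≤ sinAngle E Ehat := by
    obtain ⟨b, hbE, hb0⟩ := Submodule.exists_mem_ne_zero_of_ne_bot hE
    have hnb : (‖b‖ : ℝ) ≠ 0 := norm_ne_zero_iff.mpr hb0
    set u : H := (‖b‖⁻¹ : ℂ) • b
    have hu1 : ‖u‖ = 1 := by rw [norm_smul]; simp [norm_inv, hnb]
    have hmem : ‖u - (Submodule.orthogonalProjectionOnto Ehat u : H)‖ ∈ S :=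
      ⟨u, ⟨E.smul_mem _ hbE, hu1⟩, rfl⟩
    exact le_trans (norm_nonneg _) (le_csSup hbdd hmem)
  set g := f - μ with hg
  set p : H := (Submodule.orthogonalProjectionOnto E g : H)
  have h1 : ‖(f - μhat) - (Submodule.orthogonalProjectionOnto Ehat (f - μhat) : H)‖ ≤
      ‖g - (Submodule.orthogonalProjectionOnto Ehat g : H)‖ + ‖μ - μhat‖ := by
    have hdecomp : f - μhat = g + (μ - μhat) := by rw [hg]; abel
    calc ‖(f - μhat) - (Submodule.orthogonalProjectionOnto Ehat (f - μhat) : H)‖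
        = ‖(g + (μ - μhat)) - (Submodule.orthogonalProjectionOnto Ehat (g + (μ - μhat)) : H)‖ := by
          rw [← hdecomp]
      _ ≤ ‖g - (Submodule.orthogonalProjectionOnto Ehat g : H)‖ +
            ‖(μ - μhat) - (Submodule.orthogonalProjectionOnto Ehat (μ - μhat) : H)‖ := dist_proj_add_le _ _ _
      _ ≤ ‖g - (Submodule.orthogonalProjectionOnto Ehat g : H)‖ + ‖μ - μhat‖ := by
          exact add_le_add_right (dist_proj_le Ehat _) _
  have h2 : ‖g - (Submodule.orthogonalProjectionOnto Ehat g : H)‖ ≤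
      sinAngle E Ehat * ‖g‖ + ‖g - p‖ := by
    have hdecomp : g = p + (g - p) := by abel
    calc ‖g - (Submodule.orthogonalProjectionOnto Ehat g : H)‖
        = ‖(p + (g - p)) - (Submodule.orthogonalProjectionOnto Ehat (p + (g - p)) : H)‖ := by
          rw [← hdecomp]
      _ ≤ ‖p - (Submodule.orthogonalProjectionOnto Ehat p : H)‖ +
            ‖(g - p) - (Submodule.orthogonalProjectionOnto Ehat (g - p) : H)‖ := dist_proj_add_le _ _ _
      _ ≤ sinAngle E Ehat * ‖p‖ + ‖g - p‖ :=
          add_le_add (hkey p (SetLike.coe_mem (Submodule.orthogonalProjectionOnto E g))) (dist_proj_le Ehat _)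
      _ ≤ sinAngle E Ehat * ‖g‖ + ‖g - p‖ := by
          refine add_le_add_left (mul_le_mul_of_nonneg_left ?_ hsin_nonneg) _
          calc ‖p‖ ≤ ‖Submodule.orthogonalProjectionOnto E‖ * ‖g‖ := (Submodule.orthogonalProjectionOnto E).le_opNorm g
            _ ≤ 1 * ‖g‖ :=
              mul_le_mul_of_nonneg_right (Submodule.orthogonalProjectionOnto_norm_le _) (norm_nonneg g)
            _ = ‖g‖ := one_mul _
  linarith
end
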